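/- For σ ∈ S_{n+1}, let P_σ be the permutation matrix with e_k^T P_σ = e_{σ(k)}^T, and define the subgroup Lo_σ = Lo¹_{n+1} ∩ (P_σ Up¹_{n+1} P_σ^{-1}) of the lower unitriangular group. If ρ = ση where η is the longest element, then every L ∈ Lo¹_{n+1} can be written uniquely as L = L₁ L₂ with L₁ ∈ Lo_σ and L₂ ∈ Lo_ρ. -/

import Mathlib

open Matrix

/-- A lower unitriangular matrix. -/
def LowerUni {n : ℕ} (L : Matrix (Fin n) (Fin n) ℝ) : Prop :=
  (∀ i, L i i = 1) ∧ ∀ i j : Fin n, i < j → L i j = 0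

/-- An upper unitriangular matrix. -/
def UpperUni {n : ℕ} (U : Matrix (Fin n) (Fin n) ℝ) : Prop :=
  (∀ i, U i i = 1) ∧ ∀ i j : Fin n, j < i → U i j = 0

/-- `Lo_σ = Lo¹_{n+1} ∩ (P_σ Up¹_{n+1} P_σ⁻¹)`: lower unitriangular `L` such that
`P_σ⁻¹ L P_σ` (whose `(i,j)` entry is `L (σ⁻¹ i) (σ⁻¹ j)`, with `P_σ` defined by
`e_k^T P_σ = e_{σ(k)}^T`) is upper unitriangular. -/
def LoGrp {n : ℕ} (σ : Equiv.Perm (Fin n)) (L : Matrix (Fin n) (Fin n) ℝ) : Prop :=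
  LowerUni L ∧ UpperUni (Matrix.of fun i j : Fin n => L (σ⁻¹ i) (σ⁻¹ j))

/-- The longest element `η`, `η(j) = n+2-j` (0-indexed: `j ↦ n - j`). -/
def eta (n : ℕ) : Equiv.Perm (Fin (n + 1)) := Fin.revPerm

/-- Auxiliary: a matrix is "good" for a pattern relation `r` if it has unit
diagonal and all off-diagonal entries outside the pattern vanish. -/
def Good {m : ℕ} (r : Fin m → Fin m → Prop) (A : Matrix (Fin m) (Fin m) ℝ) : Prop :=
  (∀ i, A i i = 1) ∧ ∀ i j : Fin m, i ≠ j → ¬ r i j → A i j = 0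

lemma loGrp_iff_good {m : ℕ} (τ : Equiv.Perm (Fin m)) (A : Matrix (Fin m) (Fin m) ℝ) :
    LoGrp τ A ↔ Good (fun i j => j < i ∧ τ i < τ j) A := by
  constructor
  · rintro ⟨⟨hd, hlo⟩, _, hu2⟩
    refine ⟨hd, fun i j hij hr => ?_⟩
    rcases lt_trichotomy i j with h' | h' | h'
    · exact hlo i j h'
    · exact absurd h' hij
    · have hτ : τ j < τ i := by
        rcases lt_trichotomy (τ i) (τ j) with h2 | h2 | h2
        · exact absurd ⟨h', h2⟩ hr
        · exact absurd (τ.injective h2) hij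
        · exact h2
      have := hu2 (τ i) (τ j) hτ
      simpa using this
  · rintro ⟨hd, hz⟩
    refine ⟨⟨hd, fun i j hij => hz i j (ne_of_lt hij)
      (by rintro ⟨h1, _⟩; exact absurd (h1.trans hij) (lt_irrefl _))⟩, ?_, ?_⟩
    · intro i; simpa using hd (τ⁻¹ i)
    · intro i j hji
      have hij : i ≠ j := (ne_of_lt hji).symm
      have hne : τ⁻¹ i ≠ τ⁻¹ j := fun h => hij (by simpa using congrArg τ h)
      simp only [Matrix.of_apply]
      refine hz _ _ hne ?_
      rintro ⟨h1, h2⟩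
      simp only [Equiv.Perm.inv_def, Equiv.apply_symm_apply] at h2
      exact absurd h2 (not_lt.mpr hji.le)

lemma good_exists {m : ℕ} (σ : Equiv.Perm (Fin m)) (L : Matrix (Fin m) (Fin m) ℝ)
    (hL : LowerUni L) (d : ℕ) :
    ∃ A B : Matrix (Fin m) (Fin m) ℝ,
      Good (fun i j => j < i ∧ σ i < σ j) A ∧ Good (fun i j => j < i ∧ σ j < σ i) B ∧
      ∀ i j : Fin m, (i : ℕ) - (j : ℕ) ≤ d → (A * B) i j = L i j := by
  induction d with
  | zero =>
    refine ⟨1, 1, ?_, ?_, ?_⟩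
    · exact ⟨fun i => by simp, fun i j hij _ => by simp [Matrix.one_apply, hij]⟩
    · exact ⟨fun i => by simp, fun i j hij _ => by simp [Matrix.one_apply, hij]⟩
    · intro i j hij
      have hij' : (i : ℕ) ≤ j := by omega
      rcases eq_or_lt_of_le hij' with h | h
      · have hh : i = j := Fin.ext h
        subst hh
        simp [Matrix.one_apply, hL.1 i]
      · have hlt : i < j := h
        rw [Matrix.one_mul, Matrix.one_apply_ne (ne_of_lt hlt), hL.2 i j hlt]
  | succ d ih =>
    obtain ⟨A, B, hA, hB, hAB⟩ := ih
    set C1 : Matrix (Fin m) (Fin m) ℝ :=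
      Matrix.of (fun i j =>
        if ((i : ℕ) - (j : ℕ) = d + 1 ∧ j < i ∧ σ i < σ j) then L i j - (A * B) i j else 0)
      with hC1
    set C2 : Matrix (Fin m) (Fin m) ℝ :=
      Matrix.of (fun i j =>
        if ((i : ℕ) - (j : ℕ) = d + 1 ∧ j < i ∧ σ j < σ i) then L i j - (A * B) i j else 0)
      with hC2
    have hC1ne : ∀ i j, C1 i j ≠ 0 → ((i : ℕ) - (j : ℕ) = d + 1 ∧ j < i ∧ σ i < σ j) := by
      intro i j h
      by_contra hc
      exact h (by simp [hC1, Matrix.of_apply, if_neg hc])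
    have hC2ne : ∀ i j, C2 i j ≠ 0 → ((i : ℕ) - (j : ℕ) = d + 1 ∧ j < i ∧ σ j < σ i) := by
      intro i j h
      by_contra hc
      exact h (by simp [hC2, Matrix.of_apply, if_neg hc])
    have hAne : ∀ i j, i ≠ j → A i j ≠ 0 → (j < i ∧ σ i < σ j) := by
      intro i j hij h
      by_contra hc
      exact h (hA.2 i j hij hc)
    have hBne : ∀ i j, i ≠ j → B i j ≠ 0 → (j < i ∧ σ j < σ i) := by
      intro i j hij h
      by_contra hc
      exact h (hB.2 i j hij hc)
    refine ⟨A + C1, B + C2, ?_, ?_, ?_⟩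
    · constructor
      · intro i
        have : C1 i i = 0 := by
          simp [hC1, Matrix.of_apply]
        simp [Matrix.add_apply, this, hA.1 i]
      · intro i j hij hr
        have : C1 i j = 0 := by
          by_contra hc
          exact hr (hC1ne i j hc).2
        simp [Matrix.add_apply, this, hA.2 i j hij hr]
    · constructor
      · intro i
        have : C2 i i = 0 := by
          simp [hC2, Matrix.of_apply]
        simp [Matrix.add_apply, this, hB.1 i]
      · intro i j hij hr
        have : C2 i j = 0 := by
          by_contra hc
          exact hr (hC2ne i j hc).2
        simp [Matrix.add_apply, this, hB.2 i j hij hr]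
    · intro i j hdist
      have expand : (A + C1) * (B + C2) = A * B + A * C2 + (C1 * B + C1 * C2) := by
        noncomm_ring
      have h3 : (C1 * C2) i j = 0 := by
        rw [Matrix.mul_apply]
        apply Finset.sum_eq_zero
        intro k _
        by_contra hne
        obtain ⟨h1, h2⟩ := mul_ne_zero_iff.mp hne
        obtain ⟨e1, lk, _⟩ := hC1ne i k h1
        obtain ⟨e2, lj, _⟩ := hC2ne k j h2
        have lk' : (k : ℕ) < i := lk
        have lj' : (j : ℕ) < k := lj
        omega
      have h2 : (C1 * B) i j = C1 i j := by
        rw [Matrix.mul_apply]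
        rw [Finset.sum_eq_single j]
        · rw [hB.1 j, mul_one]
        · intro k _ hkj
          by_contra hne
          obtain ⟨h1, h2⟩ := mul_ne_zero_iff.mp hne
          obtain ⟨e1, lk, _⟩ := hC1ne i k h1
          obtain ⟨lj, _⟩ := hBne k j hkj h2
          have lk' : (k : ℕ) < i := lk
          have lj' : (j : ℕ) < k := lj
          omega
        · intro hj; exact absurd (Finset.mem_univ j) hj
      have h1 : (A * C2) i j = C2 i j := by
        rw [Matrix.mul_apply]
        rw [Finset.sum_eq_single i]
        · rw [hA.1 i, one_mul]
        · intro k _ hki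
          by_contra hne
          obtain ⟨ha, hc⟩ := mul_ne_zero_iff.mp hne
          obtain ⟨lk, _⟩ := hAne i k (Ne.symm hki) ha
          obtain ⟨e2, lj, _⟩ := hC2ne k j hc
          have lk' : (k : ℕ) < i := lk
          have lj' : (j : ℕ) < k := lj
          omega
        · intro hi; exact absurd (Finset.mem_univ i) hi
      rw [expand]
      simp only [Matrix.add_apply]
      rw [h1, h2, h3, add_zero]
      rcases Nat.lt_or_ge ((i : ℕ) - (j : ℕ)) (d + 1) with hle | hge
      · have hc1 : C1 i j = 0 := by
          simp only [hC1, Matrix.of_apply, ite_eq_right_iff]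
          intro hcond
          exact absurd hcond.1 (by omega)
        have hc2 : C2 i j = 0 := by
          simp only [hC2, Matrix.of_apply, ite_eq_right_iff]
          intro hcond
          exact absurd hcond.1 (by omega)
        rw [hc1, hc2, add_zero, add_zero]
        exact hAB i j (by omega)
      · have heq : (i : ℕ) - (j : ℕ) = d + 1 := by omega
        have hji : j < i := by
          rw [Fin.lt_def]; omega
        have hij : i ≠ j := (ne_of_lt hji).symm
        have hσ : σ i ≠ σ j := fun hh => hij (σ.injective hh)
        rcases lt_trichotomy (σ i) (σ j) with hs | hs | hs
        · have hc2 : C2 i j = 0 := by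
            simp only [hC2, Matrix.of_apply, ite_eq_right_iff]
            rintro ⟨-, -, hx⟩
            exact absurd hs (not_lt.mpr hx.le)
          have hc1 : C1 i j = L i j - (A * B) i j := by
            simp only [hC1, Matrix.of_apply]
            rw [if_pos ⟨heq, hji, hs⟩]
          rw [hc1, hc2, add_zero]
          ring
        · exact absurd hs hσ
        · have hc1 : C1 i j = 0 := by
            simp only [hC1, Matrix.of_apply, ite_eq_right_iff]
            rintro ⟨-, -, hx⟩
            exact absurd hs (not_lt.mpr hx.le)
          have hc2 : C2 i j = L i j - (A * B) i j := by
            simp only [hC2, Matrix.of_apply]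
            rw [if_pos ⟨heq, hji, hs⟩]
          rw [hc1, hc2]
          ring

lemma good_unique {m : ℕ} (σ : Equiv.Perm (Fin m)) (A B A' B' : Matrix (Fin m) (Fin m) ℝ)
    (hA : Good (fun i j => j < i ∧ σ i < σ j) A) (hB : Good (fun i j => j < i ∧ σ j < σ i) B)
    (hA' : Good (fun i j => j < i ∧ σ i < σ j) A') (hB' : Good (fun i j => j < i ∧ σ j < σ i) B')
    (hprod : A * B = A' * B') : A = A' ∧ B = B' := by
  have key : ∀ d : ℕ, ∀ i j : Fin m, (i : ℕ) - (j : ℕ) ≤ d → A i j = A' i j ∧ B i j = B' i j := by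
    intro d
    induction d with
    | zero =>
      intro i j hij
      have hij' : (i : ℕ) ≤ j := by omega
      rcases eq_or_lt_of_le hij' with h | h
      · have hh : i = j := Fin.ext h
        subst hh
        exact ⟨(hA.1 i).trans (hA'.1 i).symm, (hB.1 i).trans (hB'.1 i).symm⟩
      · have hlt : i < j := h
        have hne : i ≠ j := ne_of_lt hlt
        have hnr : ∀ τ : Equiv.Perm (Fin m), ¬ (j < i ∧ τ i < τ j) := by
          rintro τ ⟨h1, -⟩
          exact absurd (h1.trans hlt) (lt_irrefl _)
        refine ⟨?_, ?_⟩
        · rw [hA.2 i j hne (by rintro ⟨h1, -⟩; exact absurd (h1.trans hlt) (lt_irrefl _)),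
            hA'.2 i j hne (by rintro ⟨h1, -⟩; exact absurd (h1.trans hlt) (lt_irrefl _))]
        · rw [hB.2 i j hne (by rintro ⟨h1, -⟩; exact absurd (h1.trans hlt) (lt_irrefl _)),
            hB'.2 i j hne (by rintro ⟨h1, -⟩; exact absurd (h1.trans hlt) (lt_irrefl _))]
    | succ d ih =>
      intro i j hij
      rcases Nat.lt_or_ge ((i : ℕ) - (j : ℕ)) (d + 1) with hlt | hge
      · exact ih i j (by omega)
      have hdist : (i : ℕ) - (j : ℕ) = d + 1 := by omega
      have hji : j < i := by rw [Fin.lt_def]; omega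
      have hijne : i ≠ j := (ne_of_lt hji).symm
      have hsum : (A * B) i j = (A' * B') i j := by rw [hprod]
      rw [Matrix.mul_apply, Matrix.mul_apply] at hsum
      have hjmem : j ∈ Finset.univ.erase i := Finset.mem_erase.mpr ⟨Ne.symm hijne, Finset.mem_univ j⟩
      have split1 : ∀ X Y : Matrix (Fin m) (Fin m) ℝ, (∀ k, X k k = 1) → (∀ k, Y k k = 1) →
          ∑ k, X i k * Y k j
            = Y i j + (X i j + ∑ k ∈ (Finset.univ.erase i).erase j, X i k * Y k j) := by
        intro X Y hX hY
        rw [← Finset.add_sum_erase _ _ (Finset.mem_univ i), hX i, one_mul,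
          ← Finset.add_sum_erase _ _ hjmem, hY j, mul_one]
      rw [split1 A B hA.1 hB.1, split1 A' B' hA'.1 hB'.1] at hsum
      have hterms : ∑ k ∈ (Finset.univ.erase i).erase j, A i k * B k j
          = ∑ k ∈ (Finset.univ.erase i).erase j, A' i k * B' k j := by
        apply Finset.sum_congr rfl
        intro k hk
        obtain ⟨hkj, hk'⟩ := Finset.mem_erase.mp hk
        obtain ⟨hki, -⟩ := Finset.mem_erase.mp hk'
        by_cases h1 : k < i
        · by_cases h2 : j < k
          · have hik : (k : ℕ) < i := h1
            have hjk : (j : ℕ) < k := h2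
            rw [(ih i k (by omega)).1, (ih k j (by omega)).2]
          · have hb : B k j = 0 := hB.2 k j hkj (by rintro ⟨hx, -⟩; exact h2 hx)
            have hb' : B' k j = 0 := hB'.2 k j hkj (by rintro ⟨hx, -⟩; exact h2 hx)
            rw [hb, hb', mul_zero, mul_zero]
        · have ha : A i k = 0 := hA.2 i k (Ne.symm hki) (by rintro ⟨hx, -⟩; exact h1 hx)
          have ha' : A' i k = 0 := hA'.2 i k (Ne.symm hki) (by rintro ⟨hx, -⟩; exact h1 hx)
          rw [ha, ha', zero_mul, zero_mul]
      rw [hterms] at hsum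
      have heq : A i j + B i j = A' i j + B' i j := by linarith
      have hσ : σ i ≠ σ j := fun hh => hijne (σ.injective hh)
      rcases lt_trichotomy (σ i) (σ j) with hs | hs | hs
      · have hb : B i j = 0 := hB.2 i j hijne (by rintro ⟨-, hx⟩; exact absurd hs (not_lt.mpr hx.le))
        have hb' : B' i j = 0 := hB'.2 i j hijne (by rintro ⟨-, hx⟩; exact absurd hs (not_lt.mpr hx.le))
        refine ⟨by linarith, by rw [hb, hb']⟩
      · exact absurd hs hσ
      · have ha : A i j = 0 := hA.2 i j hijne (by rintro ⟨-, hx⟩; exact absurd hs (not_lt.mpr hx.le))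
        have ha' : A' i j = 0 := hA'.2 i j hijne (by rintro ⟨-, hx⟩; exact absurd hs (not_lt.mpr hx.le))
        refine ⟨by rw [ha, ha'], by linarith⟩
  constructor
  · ext i j
    exact (key m i j (by have := i.isLt; omega)).1
  · ext i j
    exact (key m i j (by have := i.isLt; omega)).2

/-- If `ρ = ση` (right-action composition: first `σ`, then `η`), then every lower
unitriangular `L` factors uniquely as `L = L₁ L₂` with `L₁ ∈ Lo_σ` and `L₂ ∈ Lo_ρ`. -/
theorem unique_factorization_LoGrp (n : ℕ) (σ ρ : Equiv.Perm (Fin (n + 1)))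
    (h : ρ = eta n * σ) (L : Matrix (Fin (n + 1)) (Fin (n + 1)) ℝ) (hL : LowerUni L) :
    ∃! p : Matrix (Fin (n + 1)) (Fin (n + 1)) ℝ × Matrix (Fin (n + 1)) (Fin (n + 1)) ℝ,
      LoGrp σ p.1 ∧ LoGrp ρ p.2 ∧ L = p.1 * p.2 := by
  subst h
  have hrel : (fun i j : Fin (n + 1) => j < i ∧ (eta n * σ) i < (eta n * σ) j)
      = (fun i j : Fin (n + 1) => j < i ∧ σ j < σ i) := by
    funext i j
    simp [eta, Equiv.Perm.mul_apply, Fin.rev_lt_rev]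
  obtain ⟨A, B, hA, hB, hAB⟩ := good_exists σ L hL (n + 1)
  have hLAB : L = A * B := by
    ext i j
    exact (hAB i j (by have := i.isLt; omega)).symm
  refine ⟨(A, B), ⟨(loGrp_iff_good σ A).mpr hA, ?_, hLAB⟩, ?_⟩
  · rw [loGrp_iff_good, hrel]
    exact hB
  · rintro ⟨A', B'⟩ ⟨h1, h2, h3⟩
    have hA' := (loGrp_iff_good σ A').mp h1
    have hB' : Good (fun i j : Fin (n + 1) => j < i ∧ σ j < σ i) B' := by
      rw [← hrel]
      exact (loGrp_iff_good (eta n * σ) B').mp h2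
    have := good_unique σ A' B' A B hA' hB' hA hB (h3.symm.trans hLAB)
    exact Prod.ext this.1 this.2
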